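/- Unthresholded CUR perturbation bound (Corollary 4.4): Writing w = ‖W_{k,I}†‖_F and v = ‖V_{k,J}†‖_F, one has ‖A − C̃ Ũ† R̃‖_F ≤ (w + v + 3·w·v)·‖E‖_F + ‖Ũ†‖_F · (w + v + w·v + 1) · ‖E‖_F². -/

import Mathlib

open Matrix

noncomputable section

variable {𝕂 : Type} [RCLike 𝕂]

/-- The Frobenius norm of a matrix. -/
noncomputable def frobNorm {m n : ℕ} (M : Matrix (Fin m) (Fin n) 𝕂) : ℝ :=
  Real.sqrt (∑ i, ∑ j, ‖M i j‖ ^ 2)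

/-- The `i`-th largest singular value of a matrix (1-indexed), i.e. the `i`-th largest
square root of an eigenvalue of `Mᴴ * M`. -/
noncomputable def sigma {m n : ℕ} (M : Matrix (Fin m) (Fin n) 𝕂) (i : ℕ) : ℝ :=
  ((List.ofFn fun j : Fin n =>
      Real.sqrt ((Matrix.isHermitian_conjTranspose_mul_self M).eigenvalues j)).insertionSort
      (· ≥ ·)).getD (i - 1) 0

/-- The spectral norm: the largest singular value. -/
noncomputable def specNorm {m n : ℕ} (M : Matrix (Fin m) (Fin n) 𝕂) : ℝ := sigma M 1

/-- `P` is the Moore–Penrose pseudoinverse of `M`: the four Penrose conditions. -/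
def IsMPInv {m n : ℕ} (M : Matrix (Fin m) (Fin n) 𝕂) (P : Matrix (Fin n) (Fin m) 𝕂) : Prop :=
  M * P * M = M ∧ P * M * P = P ∧ (M * P)ᴴ = M * P ∧ (P * M)ᴴ = P * M

/-- `Mr` is a truncated SVD of order `r` of `M`, i.e. a best rank-`r` approximation of `M`
(equivalently, a matrix obtained from an SVD of `M` by keeping the `r` largest singular
values and zeroing out the rest). -/
def IsTruncSVD {m n : ℕ} (M Mr : Matrix (Fin m) (Fin n) 𝕂) (r : ℕ) : Prop :=
  Mr.rank ≤ r ∧ ∀ B : Matrix (Fin m) (Fin n) 𝕂, B.rank ≤ r → frobNorm (M - Mr) ≤ frobNorm (M - B)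

/-- `Mt = [M]_τ`: the matrix obtained from an SVD of `M` by setting to zero every singular
value strictly less than `τ` (i.e. keeping exactly the singular values `≥ τ`). -/
def IsThresh {m n : ℕ} (M Mt : Matrix (Fin m) (Fin n) 𝕂) (τ : ℝ) : Prop :=
  IsTruncSVD M Mt (Nat.card {i : Fin (min m n) // τ ≤ sigma M ((i : ℕ) + 1)})

/-- The volume of a matrix: the product of its `min p q` largest singular values. -/
noncomputable def vol {p q : ℕ} (M : Matrix (Fin p) (Fin q) 𝕂) : ℝ :=
  ∏ i ∈ Finset.range (min p q), sigma M (i + 1)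

end

namespace CurAux
variable {𝕂 : Type} [RCLike 𝕂]

attribute [local instance] Matrix.frobeniusSeminormedAddCommGroup

lemma frobNorm_eq_norm {a b : ℕ} (M : Matrix (Fin a) (Fin b) 𝕂) : frobNorm M = ‖M‖ := by
  rw [Matrix.frobenius_norm_def, frobNorm, Real.sqrt_eq_rpow]
  congr 1
  simp [Real.rpow_two]

lemma frobNorm_nonneg {a b : ℕ} (M : Matrix (Fin a) (Fin b) 𝕂) : 0 ≤ frobNorm M :=
  Real.sqrt_nonneg _

lemma frobNorm_mul_le {a b c : ℕ} (M : Matrix (Fin a) (Fin b) 𝕂) (N : Matrix (Fin b) (Fin c) 𝕂) :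
    frobNorm (M * N) ≤ frobNorm M * frobNorm N := by
  simp only [frobNorm_eq_norm]; exact Matrix.frobenius_norm_mul M N

lemma frobNorm_conjTranspose {a b : ℕ} (M : Matrix (Fin a) (Fin b) 𝕂) :
    frobNorm Mᴴ = frobNorm M := by
  simp only [frobNorm_eq_norm]; exact Matrix.frobenius_norm_conjTranspose M

lemma sum_sq_eq_retrace {a b : ℕ} (M : Matrix (Fin a) (Fin b) 𝕂) :
    ∑ i, ∑ j, ‖M i j‖ ^ 2 = RCLike.re (Matrix.trace (Mᴴ * M)) := by
  rw [Matrix.trace]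
  simp only [Matrix.diag_apply, Matrix.mul_apply, Matrix.conjTranspose_apply, map_sum]
  rw [Finset.sum_comm]
  congr 1; funext j; congr 1; funext i
  rw [RCLike.star_def, RCLike.conj_mul, ← RCLike.ofReal_pow, RCLike.ofReal_re]

lemma frobNorm_eq_sqrt_trace {a b : ℕ} (M : Matrix (Fin a) (Fin b) 𝕂) :
    frobNorm M = Real.sqrt (RCLike.re (Matrix.trace (Mᴴ * M))) := by
  rw [frobNorm, sum_sq_eq_retrace]

lemma frobNorm_unitary_left {a b c : ℕ} (W : Matrix (Fin a) (Fin b) 𝕂) (hW : Wᴴ * W = 1)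
    (M : Matrix (Fin b) (Fin c) 𝕂) : frobNorm (W * M) = frobNorm M := by
  rw [frobNorm_eq_sqrt_trace, frobNorm_eq_sqrt_trace M]
  congr 3
  rw [conjTranspose_mul, Matrix.mul_assoc, ← Matrix.mul_assoc Wᴴ, hW, Matrix.one_mul]

lemma frobNorm_unitary_right {a b c : ℕ} (V : Matrix (Fin a) (Fin b) 𝕂) (hV : Vᴴ * V = 1)
    (M : Matrix (Fin c) (Fin b) 𝕂) : frobNorm (M * Vᴴ) = frobNorm M := by
  rw [← frobNorm_conjTranspose (M * Vᴴ), conjTranspose_mul, conjTranspose_conjTranspose,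
    frobNorm_unitary_left V hV, frobNorm_conjTranspose]

lemma frobNorm_proj_left {a c : ℕ} (Q : Matrix (Fin a) (Fin a) 𝕂) (hQH : Qᴴ = Q)
    (hQ2 : Q * Q = Q) (M : Matrix (Fin a) (Fin c) 𝕂) : frobNorm (Q * M) ≤ frobNorm M := by
  rw [frobNorm, frobNorm]
  apply Real.sqrt_le_sqrt
  have h1 : (Q * M)ᴴ * (Q * M) = Mᴴ * (Q * M) := by
    rw [conjTranspose_mul, hQH, Matrix.mul_assoc, ← Matrix.mul_assoc Q, hQ2]
  set P : Matrix (Fin a) (Fin a) 𝕂 := 1 - Q with hPdef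
  have hH : Pᴴ = P := by
    rw [hPdef, conjTranspose_sub, conjTranspose_one, hQH]
  have h2' : P * P = P := by
    rw [hPdef]
    simp [Matrix.sub_mul, Matrix.mul_sub, hQ2]
  have h2 : (P * M)ᴴ * (P * M) = Mᴴ * (P * M) := by
    rw [conjTranspose_mul, hH, Matrix.mul_assoc, ← Matrix.mul_assoc P, h2']
  have key : (∑ i, ∑ j, ‖(Q * M) i j‖ ^ 2) + (∑ i, ∑ j, ‖(P * M) i j‖ ^ 2)
      = ∑ i, ∑ j, ‖M i j‖ ^ 2 := by
    rw [sum_sq_eq_retrace, sum_sq_eq_retrace, sum_sq_eq_retrace, ← map_add, ← Matrix.trace_add,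
      h1, h2, ← Matrix.mul_add]
    congr 3
    rw [hPdef]
    simp [Matrix.sub_mul]
  have h0 : 0 ≤ ∑ i, ∑ j, ‖(P * M) i j‖ ^ 2 := by positivity
  linarith

lemma frobNorm_proj_right {a c : ℕ} (Q : Matrix (Fin a) (Fin a) 𝕂) (hQH : Qᴴ = Q)
    (hQ2 : Q * Q = Q) (M : Matrix (Fin c) (Fin a) 𝕂) : frobNorm (M * Q) ≤ frobNorm M := by
  rw [← frobNorm_conjTranspose (M * Q), conjTranspose_mul, hQH, ← frobNorm_conjTranspose M]
  exact frobNorm_proj_left Q hQH hQ2 Mᴴ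

lemma frobNorm_submatrix_le {a b c e : ℕ} (M : Matrix (Fin a) (Fin b) 𝕂)
    (f : Fin c → Fin a) (g : Fin e → Fin b) (hf : Function.Injective f)
    (hg : Function.Injective g) : frobNorm (M.submatrix f g) ≤ frobNorm M := by
  apply Real.sqrt_le_sqrt
  rw [← Fintype.sum_prod_type', ← Fintype.sum_prod_type']
  let emb : Fin c × Fin e ↪ Fin a × Fin b :=
    ⟨fun x => (f x.1, g x.2), by
      intro x y h
      have h1 := congrArg Prod.fst h
      have h2 := congrArg Prod.snd h
      exact Prod.ext (hf h1) (hg h2)⟩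
  calc ∑ x : Fin c × Fin e, ‖M.submatrix f g x.1 x.2‖ ^ 2
      = ∑ y ∈ Finset.univ.map emb, ‖M y.1 y.2‖ ^ 2 := by
        rw [Finset.sum_map]; rfl
    _ ≤ ∑ y : Fin a × Fin b, ‖M y.1 y.2‖ ^ 2 :=
        Finset.sum_le_sum_of_subset_of_nonneg (Finset.subset_univ _)
          (fun y _ _ => by positivity)

lemma full_rank_cancel {a b c : ℕ} (M : Matrix (Fin a) (Fin b) 𝕂) (h : M.rank = b)
    {X Y : Matrix (Fin b) (Fin c) 𝕂} (hXY : M * X = M * Y) : X = Y := by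
  have h' : Module.finrank 𝕂 (LinearMap.range M.mulVecLin) = b := h
  have hrk := M.mulVecLin.finrank_range_add_finrank_ker
  rw [h', Module.finrank_fin_fun] at hrk
  have hker : LinearMap.ker M.mulVecLin = ⊥ := by
    rw [← Submodule.finrank_eq_zero (R := 𝕂)]
    omega
  have hinj : Function.Injective M.mulVecLin := LinearMap.ker_eq_bot.mp hker
  ext i j
  have hcol : M.mulVecLin (fun r => X r j) = M.mulVecLin (fun r => Y r j) := by
    funext i'
    have h0 := congrFun (congrFun hXY i') j
    simpa [Matrix.mulVecLin_apply, Matrix.mul_apply, Matrix.mulVec, dotProduct] using h0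
  exact congrFun (hinj hcol) i

open scoped ComplexOrder in
lemma rank_conjTranspose' {a b : ℕ} (M : Matrix (Fin a) (Fin b) 𝕂) : Mᴴ.rank = M.rank :=
  haveI := RCLike.toStarOrderedRing (K := 𝕂)
  Matrix.rank_conjTranspose M

lemma submatrix_mul' {a b c e f : ℕ} (M : Matrix (Fin a) (Fin b) 𝕂) (N : Matrix (Fin b) (Fin c) 𝕂)
    (g : Fin e → Fin a) (h : Fin f → Fin c) :
    (M * N).submatrix g h = M.submatrix g id * N.submatrix id h := by
  ext i j; simp [Matrix.mul_apply]

end CurAux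

attribute [local instance] Matrix.frobeniusSeminormedAddCommGroup

set_option maxHeartbeats 2000000 in
open CurAux in
/-- Corollary 4.4: unthresholded CUR perturbation bound. -/
theorem cur_perturbation {𝕂 : Type} [RCLike 𝕂] {m n k p q : ℕ}
    (A E : Matrix (Fin m) (Fin n) 𝕂)
    (hrankA : A.rank = k)
    (ι : Fin p ↪ Fin m) (κ : Fin q ↪ Fin n)
    (hrankC : (A.submatrix id ⇑κ).rank = k)
    (hrankU : (A.submatrix ⇑ι ⇑κ).rank = k)
    (hrankR : (A.submatrix ⇑ι id).rank = k)
    (W : Matrix (Fin m) (Fin k) 𝕂) (V : Matrix (Fin n) (Fin k) 𝕂) (d : Fin k → ℝ)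
    (hW : Wᴴ * W = 1) (hV : Vᴴ * V = 1)
    (hmono : ∀ i j : Fin k, i ≤ j → d j ≤ d i) (hpos : ∀ i, 0 < d i)
    (hSVD : A = W * Matrix.diagonal (fun i => (d i : 𝕂)) * Vᴴ)
    (Wp : Matrix (Fin k) (Fin p) 𝕂) (hWp : IsMPInv (W.submatrix ⇑ι id) Wp)
    (Vp : Matrix (Fin k) (Fin q) 𝕂) (hVp : IsMPInv (V.submatrix ⇑κ id) Vp)
    (Utp : Matrix (Fin q) (Fin p) 𝕂) (hUtp : IsMPInv ((A + E).submatrix ⇑ι ⇑κ) Utp) :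
    frobNorm (A - (A + E).submatrix id ⇑κ * Utp * (A + E).submatrix ⇑ι id) ≤
      (frobNorm Wp + frobNorm Vp + 3 * (frobNorm Wp * frobNorm Vp)) * frobNorm E +
        frobNorm Utp * (frobNorm Wp + frobNorm Vp + frobNorm Wp * frobNorm Vp + 1) *
          frobNorm E ^ 2 := by
  classical
  set D : Matrix (Fin k) (Fin k) 𝕂 := Matrix.diagonal (fun i => (d i : 𝕂)) with hDdef
  set Wi : Matrix (Fin p) (Fin k) 𝕂 := W.submatrix ⇑ι id with hWidef
  set Vj : Matrix (Fin q) (Fin k) 𝕂 := V.submatrix ⇑κ id with hVjdef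
  -- factorizations of the submatrices
  have hVjH : Vᴴ.submatrix id ⇑κ = Vjᴴ := by
    rw [hVjdef, conjTranspose_submatrix]
  have hU : A.submatrix ⇑ι ⇑κ = Wi * (D * Vjᴴ) := by
    rw [hSVD, Matrix.mul_assoc, submatrix_mul' W (D * Vᴴ) ⇑ι ⇑κ, ← hWidef,
      submatrix_mul' D Vᴴ id ⇑κ, Matrix.submatrix_id_id, hVjH]
  have hC : A.submatrix id ⇑κ = W * (D * Vjᴴ) := by
    rw [hSVD, Matrix.mul_assoc, submatrix_mul' W (D * Vᴴ) id ⇑κ, Matrix.submatrix_id_id,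
      submatrix_mul' D Vᴴ id ⇑κ, Matrix.submatrix_id_id, hVjH]
  have hR : A.submatrix ⇑ι id = Wi * (D * Vᴴ) := by
    rw [hSVD, Matrix.mul_assoc, submatrix_mul' W (D * Vᴴ) ⇑ι id, ← hWidef,
      Matrix.submatrix_id_id]
  -- ranks of Wi and Vj
  have hrankWi : Wi.rank = k := by
    refine le_antisymm (le_trans (Matrix.rank_le_card_width Wi) (by simp)) ?_
    calc k = (A.submatrix ⇑ι ⇑κ).rank := hrankU.symm
      _ ≤ Wi.rank := by rw [hU]; exact Matrix.rank_mul_le_left Wi (D * Vjᴴ)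
  have hrankVj : Vj.rank = k := by
    refine le_antisymm (le_trans (Matrix.rank_le_card_width Vj) (by simp)) ?_
    calc k = (A.submatrix ⇑ι ⇑κ).rank := hrankU.symm
      _ ≤ Vjᴴ.rank := by
          rw [hU, ← Matrix.mul_assoc]
          exact Matrix.rank_mul_le_right (Wi * D) Vjᴴ
      _ = Vj.rank := rank_conjTranspose' Vj
  -- cancellation identities
  have hWpWi : Wp * Wi = 1 := by
    refine full_rank_cancel Wi hrankWi ?_
    rw [Matrix.mul_one, ← Matrix.mul_assoc, hWp.1]
  have hVpVj : Vp * Vj = 1 := by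
    refine full_rank_cancel Vj hrankVj ?_
    rw [Matrix.mul_one, ← Matrix.mul_assoc, hVp.1]
  have hVjVp : Vjᴴ * Vpᴴ = 1 := by
    rw [← conjTranspose_mul, hVpVj, conjTranspose_one]
  -- the key players
  set Y : Matrix (Fin m) (Fin p) 𝕂 := W * Wp with hYdef
  set X : Matrix (Fin q) (Fin n) 𝕂 := Vpᴴ * Vᴴ with hXdef
  set U : Matrix (Fin p) (Fin q) 𝕂 := A.submatrix ⇑ι ⇑κ with hUdef
  set Ut : Matrix (Fin p) (Fin q) 𝕂 := (A + E).submatrix ⇑ι ⇑κ with hUtdef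
  set Ea : Matrix (Fin p) (Fin q) 𝕂 := E.submatrix ⇑ι ⇑κ with hEadef
  set Eb : Matrix (Fin p) (Fin n) 𝕂 := E.submatrix ⇑ι id with hEbdef
  set Ec : Matrix (Fin m) (Fin q) 𝕂 := E.submatrix id ⇑κ with hEcdef
  have hUt : Ut = U + Ea := by
    rw [hUtdef, hUdef, hEadef]; ext i j; simp [Matrix.add_apply]
  have hYU : Y * U = A.submatrix id ⇑κ := by
    rw [hYdef, hU, hC, Matrix.mul_assoc, ← Matrix.mul_assoc Wp, hWpWi, Matrix.one_mul]
  have hUX : U * X = A.submatrix ⇑ι id := by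
    rw [hU, hXdef, hR]
    simp only [Matrix.mul_assoc]
    rw [← Matrix.mul_assoc Vjᴴ, hVjVp, Matrix.one_mul]
  have hA' : A = Y * (U * X) := by
    rw [hUX, hR, hYdef, hSVD, Matrix.mul_assoc W Wp, ← Matrix.mul_assoc Wp, hWpWi,
      Matrix.one_mul, Matrix.mul_assoc]
  have hCt : (A + E).submatrix id ⇑κ = Y * U + Ec := by
    rw [hYU, hEcdef]; ext i j; simp [Matrix.add_apply]
  have hRt : (A + E).submatrix ⇑ι id = U * X + Eb := by
    rw [hUX, hEbdef]; ext i j; simp [Matrix.add_apply]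
  have hUe : U = Ut - Ea := by rw [hUt]; abel
  have hP : ∀ {r : ℕ} (Z : Matrix (Fin q) (Fin r) 𝕂), Ut * (Utp * (Ut * Z)) = Ut * Z := by
    intro r Z
    rw [← Matrix.mul_assoc, ← Matrix.mul_assoc, hUtp.1]
  -- the key algebraic identity
  have hkey : A - (A + E).submatrix id ⇑κ * Utp * (A + E).submatrix ⇑ι id
      = -(Y * (Ea * X)) + Y * (Ut * (Utp * (Ea * X))) + Y * (Ea * (Utp * (Ut * X)))
        - Y * (Ea * (Utp * (Ea * X))) - Y * (Ut * (Utp * Eb)) + Y * (Ea * (Utp * Eb))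
        - Ec * (Utp * (Ut * X)) + Ec * (Utp * (Ea * X)) - Ec * (Utp * Eb) := by
    rw [hCt, hRt, hA', hUe]
    simp only [Matrix.sub_mul, Matrix.mul_sub, Matrix.add_mul, Matrix.mul_add,
      Matrix.mul_assoc, hP]
    abel
  -- norm facts
  set w := frobNorm Wp with hw
  set v := frobNorm Vp with hv
  set u := frobNorm Utp with hu
  set e := frobNorm E with he
  have hw0 : 0 ≤ w := frobNorm_nonneg Wp
  have hv0 : 0 ≤ v := frobNorm_nonneg Vp
  have hu0 : 0 ≤ u := frobNorm_nonneg Utp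
  have he0 : 0 ≤ e := frobNorm_nonneg E
  have hYn : ∀ {r : ℕ} (M : Matrix (Fin p) (Fin r) 𝕂), frobNorm (Y * M) ≤ w * frobNorm M := by
    intro r M
    rw [hYdef, Matrix.mul_assoc, frobNorm_unitary_left W hW]
    exact frobNorm_mul_le Wp M
  have hXn : ∀ {r : ℕ} (M : Matrix (Fin r) (Fin q) 𝕂), frobNorm (M * X) ≤ frobNorm M * v := by
    intro r M
    rw [hXdef, ← Matrix.mul_assoc, frobNorm_unitary_right V hV]
    calc frobNorm (M * Vpᴴ) ≤ frobNorm M * frobNorm Vpᴴ := frobNorm_mul_le M Vpᴴ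
      _ = frobNorm M * v := by rw [frobNorm_conjTranspose]
  have hQidem : (Ut * Utp) * (Ut * Utp) = Ut * Utp := by
    rw [← Matrix.mul_assoc (Ut * Utp) Ut Utp, hUtp.1]
  have hQidem' : (Utp * Ut) * (Utp * Ut) = Utp * Ut := by
    rw [← Matrix.mul_assoc (Utp * Ut) Utp Ut, hUtp.2.1]
  have hQl : ∀ {r : ℕ} (M : Matrix (Fin p) (Fin r) 𝕂),
      frobNorm (Ut * (Utp * M)) ≤ frobNorm M := by
    intro r M
    rw [← Matrix.mul_assoc]
    exact frobNorm_proj_left (Ut * Utp) hUtp.2.2.1 hQidem M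
  have hQr : ∀ {r : ℕ} (M : Matrix (Fin r) (Fin q) 𝕂),
      frobNorm (M * (Utp * Ut)) ≤ frobNorm M :=
    fun M => frobNorm_proj_right (Utp * Ut) hUtp.2.2.2 hQidem' M
  have hEa : frobNorm Ea ≤ e := frobNorm_submatrix_le E ⇑ι ⇑κ ι.injective κ.injective
  have hEb : frobNorm Eb ≤ e := frobNorm_submatrix_le E ⇑ι id ι.injective Function.injective_id
  have hEc : frobNorm Ec ≤ e := frobNorm_submatrix_le E id ⇑κ Function.injective_id κ.injective
  -- bound on Ea * X
  have hEaX : frobNorm (Ea * X) ≤ e * v :=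
    le_trans (hXn Ea) (mul_le_mul_of_nonneg_right hEa hv0)
  have hUtpEaX : frobNorm (Utp * (Ea * X)) ≤ u * (e * v) :=
    le_trans (frobNorm_mul_le Utp (Ea * X)) (mul_le_mul_of_nonneg_left hEaX hu0)
  have hUtpEb : frobNorm (Utp * Eb) ≤ u * e :=
    le_trans (frobNorm_mul_le Utp Eb) (mul_le_mul_of_nonneg_left hEb hu0)
  -- the nine term bounds
  have b1 : frobNorm (Y * (Ea * X)) ≤ w * (e * v) :=
    le_trans (hYn _) (mul_le_mul_of_nonneg_left hEaX hw0)
  have b2 : frobNorm (Y * (Ut * (Utp * (Ea * X)))) ≤ w * (e * v) :=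
    le_trans (hYn _) (mul_le_mul_of_nonneg_left (le_trans (hQl _) hEaX) hw0)
  have hinner3 : frobNorm (Ea * (Utp * (Ut * X))) ≤ e * v := by
    have hrw : Ea * (Utp * (Ut * X)) = (Ea * (Utp * Ut)) * X := by
      simp only [Matrix.mul_assoc]
    rw [hrw]
    exact le_trans (hXn _) (mul_le_mul_of_nonneg_right (le_trans (hQr _) hEa) hv0)
  have b3 : frobNorm (Y * (Ea * (Utp * (Ut * X)))) ≤ w * (e * v) :=
    le_trans (hYn _) (mul_le_mul_of_nonneg_left hinner3 hw0)
  have hinner4 : frobNorm (Ea * (Utp * (Ea * X))) ≤ e * (u * (e * v)) :=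
    le_trans (frobNorm_mul_le Ea _)
      (mul_le_mul hEa hUtpEaX (frobNorm_nonneg _) he0)
  have b4 : frobNorm (Y * (Ea * (Utp * (Ea * X)))) ≤ w * (e * (u * (e * v))) :=
    le_trans (hYn _) (mul_le_mul_of_nonneg_left hinner4 hw0)
  have b5 : frobNorm (Y * (Ut * (Utp * Eb))) ≤ w * e :=
    le_trans (hYn _) (mul_le_mul_of_nonneg_left (le_trans (hQl _) hEb) hw0)
  have hinner6 : frobNorm (Ea * (Utp * Eb)) ≤ e * (u * e) :=
    le_trans (frobNorm_mul_le Ea _)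
      (mul_le_mul hEa hUtpEb (frobNorm_nonneg _) he0)
  have b6 : frobNorm (Y * (Ea * (Utp * Eb))) ≤ w * (e * (u * e)) :=
    le_trans (hYn _) (mul_le_mul_of_nonneg_left hinner6 hw0)
  have b7 : frobNorm (Ec * (Utp * (Ut * X))) ≤ e * v := by
    have hrw : Ec * (Utp * (Ut * X)) = (Ec * (Utp * Ut)) * X := by
      simp only [Matrix.mul_assoc]
    rw [hrw]
    exact le_trans (hXn _) (mul_le_mul_of_nonneg_right (le_trans (hQr _) hEc) hv0)
  have b8 : frobNorm (Ec * (Utp * (Ea * X))) ≤ e * (u * (e * v)) :=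
    le_trans (frobNorm_mul_le Ec _)
      (mul_le_mul hEc hUtpEaX (frobNorm_nonneg _) he0)
  have b9 : frobNorm (Ec * (Utp * Eb)) ≤ e * (u * e) :=
    le_trans (frobNorm_mul_le Ec _)
      (mul_le_mul hEc hUtpEb (frobNorm_nonneg _) he0)
  -- triangle inequality over the nine terms
  have tri : frobNorm (A - (A + E).submatrix id ⇑κ * Utp * (A + E).submatrix ⇑ι id)
      ≤ frobNorm (Y * (Ea * X)) + frobNorm (Y * (Ut * (Utp * (Ea * X))))
        + frobNorm (Y * (Ea * (Utp * (Ut * X)))) + frobNorm (Y * (Ea * (Utp * (Ea * X))))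
        + frobNorm (Y * (Ut * (Utp * Eb))) + frobNorm (Y * (Ea * (Utp * Eb)))
        + frobNorm (Ec * (Utp * (Ut * X))) + frobNorm (Ec * (Utp * (Ea * X)))
        + frobNorm (Ec * (Utp * Eb)) := by
    rw [hkey]
    simp only [frobNorm_eq_norm]
    calc ‖-(Y * (Ea * X)) + Y * (Ut * (Utp * (Ea * X))) + Y * (Ea * (Utp * (Ut * X)))
        - Y * (Ea * (Utp * (Ea * X))) - Y * (Ut * (Utp * Eb)) + Y * (Ea * (Utp * Eb))
        - Ec * (Utp * (Ut * X)) + Ec * (Utp * (Ea * X)) - Ec * (Utp * Eb)‖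
        ≤ ‖-(Y * (Ea * X)) + Y * (Ut * (Utp * (Ea * X))) + Y * (Ea * (Utp * (Ut * X)))
            - Y * (Ea * (Utp * (Ea * X))) - Y * (Ut * (Utp * Eb)) + Y * (Ea * (Utp * Eb))
            - Ec * (Utp * (Ut * X)) + Ec * (Utp * (Ea * X))‖ + ‖Ec * (Utp * Eb)‖ :=
          norm_sub_le _ _
      _ ≤ (‖-(Y * (Ea * X)) + Y * (Ut * (Utp * (Ea * X))) + Y * (Ea * (Utp * (Ut * X)))
            - Y * (Ea * (Utp * (Ea * X))) - Y * (Ut * (Utp * Eb)) + Y * (Ea * (Utp * Eb))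
            - Ec * (Utp * (Ut * X))‖ + ‖Ec * (Utp * (Ea * X))‖) + ‖Ec * (Utp * Eb)‖ :=
          add_le_add_left (norm_add_le _ _) _
      _ ≤ ((‖-(Y * (Ea * X)) + Y * (Ut * (Utp * (Ea * X))) + Y * (Ea * (Utp * (Ut * X)))
            - Y * (Ea * (Utp * (Ea * X))) - Y * (Ut * (Utp * Eb)) + Y * (Ea * (Utp * Eb))‖
            + ‖Ec * (Utp * (Ut * X))‖) + ‖Ec * (Utp * (Ea * X))‖) + ‖Ec * (Utp * Eb)‖ :=
          add_le_add_left (add_le_add_left (norm_sub_le _ _) _) _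
      _ ≤ (((‖-(Y * (Ea * X)) + Y * (Ut * (Utp * (Ea * X))) + Y * (Ea * (Utp * (Ut * X)))
            - Y * (Ea * (Utp * (Ea * X))) - Y * (Ut * (Utp * Eb))‖ + ‖Y * (Ea * (Utp * Eb))‖)
            + ‖Ec * (Utp * (Ut * X))‖) + ‖Ec * (Utp * (Ea * X))‖) + ‖Ec * (Utp * Eb)‖ :=
          add_le_add_left (add_le_add_left (add_le_add_left (norm_add_le _ _) _) _) _
      _ ≤ ((((‖-(Y * (Ea * X)) + Y * (Ut * (Utp * (Ea * X))) + Y * (Ea * (Utp * (Ut * X)))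
            - Y * (Ea * (Utp * (Ea * X)))‖ + ‖Y * (Ut * (Utp * Eb))‖) + ‖Y * (Ea * (Utp * Eb))‖)
            + ‖Ec * (Utp * (Ut * X))‖) + ‖Ec * (Utp * (Ea * X))‖) + ‖Ec * (Utp * Eb)‖ :=
          add_le_add_left (add_le_add_left (add_le_add_left (add_le_add_left
            (norm_sub_le _ _) _) _) _) _
      _ ≤ (((((‖-(Y * (Ea * X)) + Y * (Ut * (Utp * (Ea * X))) + Y * (Ea * (Utp * (Ut * X)))‖
            + ‖Y * (Ea * (Utp * (Ea * X)))‖) + ‖Y * (Ut * (Utp * Eb))‖) + ‖Y * (Ea * (Utp * Eb))‖)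
            + ‖Ec * (Utp * (Ut * X))‖) + ‖Ec * (Utp * (Ea * X))‖) + ‖Ec * (Utp * Eb)‖ :=
          add_le_add_left (add_le_add_left (add_le_add_left (add_le_add_left
            (add_le_add_left (norm_sub_le _ _) _) _) _) _) _
      _ ≤ ((((((‖-(Y * (Ea * X)) + Y * (Ut * (Utp * (Ea * X)))‖
            + ‖Y * (Ea * (Utp * (Ut * X)))‖) + ‖Y * (Ea * (Utp * (Ea * X)))‖)
            + ‖Y * (Ut * (Utp * Eb))‖) + ‖Y * (Ea * (Utp * Eb))‖)
            + ‖Ec * (Utp * (Ut * X))‖) + ‖Ec * (Utp * (Ea * X))‖) + ‖Ec * (Utp * Eb)‖ :=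
          add_le_add_left (add_le_add_left (add_le_add_left (add_le_add_left
            (add_le_add_left (add_le_add_left (norm_add_le _ _) _) _) _) _) _) _
      _ ≤ (((((((‖-(Y * (Ea * X))‖ + ‖Y * (Ut * (Utp * (Ea * X)))‖)
            + ‖Y * (Ea * (Utp * (Ut * X)))‖) + ‖Y * (Ea * (Utp * (Ea * X)))‖)
            + ‖Y * (Ut * (Utp * Eb))‖) + ‖Y * (Ea * (Utp * Eb))‖)
            + ‖Ec * (Utp * (Ut * X))‖) + ‖Ec * (Utp * (Ea * X))‖) + ‖Ec * (Utp * Eb)‖ :=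
          add_le_add_left (add_le_add_left (add_le_add_left (add_le_add_left
            (add_le_add_left (add_le_add_left (add_le_add_left (norm_add_le _ _) _) _) _)
            _) _) _) _
      _ = ‖Y * (Ea * X)‖ + ‖Y * (Ut * (Utp * (Ea * X)))‖
            + ‖Y * (Ea * (Utp * (Ut * X)))‖ + ‖Y * (Ea * (Utp * (Ea * X)))‖
            + ‖Y * (Ut * (Utp * Eb))‖ + ‖Y * (Ea * (Utp * Eb))‖
            + ‖Ec * (Utp * (Ut * X))‖ + ‖Ec * (Utp * (Ea * X))‖ + ‖Ec * (Utp * Eb)‖ := by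
          rw [norm_neg]
  calc frobNorm (A - (A + E).submatrix id ⇑κ * Utp * (A + E).submatrix ⇑ι id)
      ≤ frobNorm (Y * (Ea * X)) + frobNorm (Y * (Ut * (Utp * (Ea * X))))
        + frobNorm (Y * (Ea * (Utp * (Ut * X)))) + frobNorm (Y * (Ea * (Utp * (Ea * X))))
        + frobNorm (Y * (Ut * (Utp * Eb))) + frobNorm (Y * (Ea * (Utp * Eb)))
        + frobNorm (Ec * (Utp * (Ut * X))) + frobNorm (Ec * (Utp * (Ea * X)))
        + frobNorm (Ec * (Utp * Eb)) := tri
    _ ≤ w * (e * v) + w * (e * v) + w * (e * v) + w * (e * (u * (e * v))) + w * e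
        + w * (e * (u * e)) + e * v + e * (u * (e * v)) + e * (u * e) := by
        exact add_le_add (add_le_add (add_le_add (add_le_add (add_le_add (add_le_add
          (add_le_add (add_le_add b1 b2) b3) b4) b5) b6) b7) b8) b9
    _ = (w + v + 3 * (w * v)) * e + u * (w + v + w * v + 1) * e ^ 2 := by ring
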